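/- The function f_HD(k) = (1 - wλ(1/R_a + (2(K-k)+1)/R_b))/(2(K+1)/R_b + w(k+1)/R_a), viewed as a real function of k ∈ [1, K), is monotonically decreasing in k if λ ≤ R_a / (4(K+1)(R_a/R_b)² + (2K+3)w(R_a/R_b) + w), and monotonically increasing otherwise. -/

import Mathlib

open Set

/-- Interior bottleneck function `f_HD` viewed as a real function of `k`. -/
noncomputable def fHDreal (K w lam Ra Rb k : ℝ) : ℝ :=
  (1 - w * lam * (1 / Ra + (2 * (K - k) + 1) / Rb)) /
    (2 * (K + 1) / Rb + w * (k + 1) / Ra)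

/-- The function `k ↦ f_HD(k)` on `[1, K)` is monotonically decreasing if
`λ ≤ R_a / (4(K+1)(R_a/R_b)² + (2K+3)w(R_a/R_b) + w)`, and monotonically
increasing otherwise. -/
theorem fHDreal_monotone
    (K w lam Ra Rb : ℝ) (hK : 2 ≤ K) (hw : 1 ≤ w)
    (hlam : 0 < lam) (hRa : 0 < Ra) (hRb : 0 < Rb) :
    (lam ≤ Ra / (4 * (K + 1) * (Ra / Rb) ^ 2 + (2 * K + 3) * w * (Ra / Rb) + w) →
      AntitoneOn (fHDreal K w lam Ra Rb) (Ico 1 K)) ∧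
    (Ra / (4 * (K + 1) * (Ra / Rb) ^ 2 + (2 * K + 3) * w * (Ra / Rb) + w) < lam →
      MonotoneOn (fHDreal K w lam Ra Rb) (Ico 1 K)) := by
  have hx : 0 < Ra / Rb := div_pos hRa hRb
  have hbig : 0 < 4 * (K + 1) * (Ra / Rb) ^ 2 + (2 * K + 3) * w * (Ra / Rb) + w := by
    have t1 : 0 < 4 * (K + 1) * (Ra / Rb) ^ 2 :=
      mul_pos (by linarith) (pow_pos hx 2)
    have t2 : 0 < (2 * K + 3) * w * (Ra / Rb) :=
      mul_pos (mul_pos (by linarith) (by linarith)) hx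
    linarith
  have hPpos : 0 < 4 * (K + 1) * Ra ^ 2 + (2 * K + 3) * w * Ra * Rb + w * Rb ^ 2 := by
    have t1 : 0 < 4 * (K + 1) * Ra ^ 2 := mul_pos (by linarith) (pow_pos hRa 2)
    have t2 : 0 < (2 * K + 3) * w * Ra * Rb :=
      mul_pos (mul_pos (mul_pos (by linarith) (by linarith)) hRa) hRb
    have t3 : 0 < w * Rb ^ 2 := mul_pos (by linarith) (pow_pos hRb 2)
    linarith
  have heq : Ra / (4 * (K + 1) * (Ra / Rb) ^ 2 + (2 * K + 3) * w * (Ra / Rb) + w)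
      = Ra * Rb ^ 2 / (4 * (K + 1) * Ra ^ 2 + (2 * K + 3) * w * Ra * Rb + w * Rb ^ 2) := by
    rw [div_eq_div_iff hbig.ne' hPpos.ne']
    field_simp
  have hrw : ∀ k ∈ Ico (1:ℝ) K, fHDreal K w lam Ra Rb k =
      (Ra * Rb - w * lam * (Rb + (2 * (K - k) + 1) * Ra)) /
        (2 * (K + 1) * Ra + w * (k + 1) * Rb) := by
    intro k hk
    have hk1 : (1:ℝ) ≤ k := hk.1
    have hden0 : 0 < 2 * (K + 1) / Rb + w * (k + 1) / Ra := by
      have t1 : 0 < 2 * (K + 1) / Rb := div_pos (by linarith) hRb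
      have t2 : 0 < w * (k + 1) / Ra := div_pos (by nlinarith) hRa
      linarith
    have hD : 0 < 2 * (K + 1) * Ra + w * (k + 1) * Rb := by
      have t1 : 0 < 2 * (K + 1) * Ra := mul_pos (by linarith) hRa
      have t2 : 0 < w * (k + 1) * Rb := mul_pos (by nlinarith) hRb
      linarith
    unfold fHDreal
    rw [div_eq_div_iff hden0.ne' hD.ne']
    field_simp
  have hDpos : ∀ k ∈ Ico (1:ℝ) K, 0 < 2 * (K + 1) * Ra + w * (k + 1) * Rb := by
    intro k hk
    have hk1 : (1:ℝ) ≤ k := hk.1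
    have t1 : 0 < 2 * (K + 1) * Ra := mul_pos (by linarith) hRa
    have t2 : 0 < w * (k + 1) * Rb := mul_pos (by nlinarith) hRb
    linarith
  constructor
  · intro hcond a ha b hb hab
    rw [heq] at hcond
    have hc2 : lam * (4 * (K + 1) * Ra ^ 2 + (2 * K + 3) * w * Ra * Rb + w * Rb ^ 2)
        ≤ Ra * Rb ^ 2 := (le_div_iff₀ hPpos).mp hcond
    rw [hrw a ha, hrw b hb]
    rw [div_le_div_iff₀ (hDpos b hb) (hDpos a ha)]
    nlinarith [mul_nonneg (mul_nonneg (by linarith : (0:ℝ) ≤ w) (sub_nonneg.2 hab))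
      (sub_nonneg.2 hc2)]
  · intro hcond a ha b hb hab
    rw [heq] at hcond
    have hc2 : Ra * Rb ^ 2
        ≤ lam * (4 * (K + 1) * Ra ^ 2 + (2 * K + 3) * w * Ra * Rb + w * Rb ^ 2) :=
      ((div_lt_iff₀ hPpos).mp hcond).le
    rw [hrw a ha, hrw b hb]
    rw [div_le_div_iff₀ (hDpos a ha) (hDpos b hb)]
    nlinarith [mul_nonneg (mul_nonneg (by linarith : (0:ℝ) ≤ w) (sub_nonneg.2 hab))
      (sub_nonneg.2 hc2)]
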